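/- Let C = ⟨(b|0), (ℓ | fh + 2f)⟩ ⊆ R_{α,β} be a Z_2Z_4-additive cyclic code with fhg = x^β - 1, β odd. Then the subcode C_b of C consisting of all codewords of order dividing 2 equals the Z_4[x]-submodule generated by (b|0), (ℓg | 2fg), and (0 | 2fh). -/
import Mathlib

open Polynomial

/-- Reduction modulo 2, `Z₄[x] → Z₂[x]`. -/
noncomputable def red42 : Polynomial (ZMod 4) →+* Polynomial (ZMod 2) :=
  Polynomial.mapRingHom (ZMod.castHom (show 2 ∣ 4 by norm_num) (ZMod 2))

/-- The polynomial `∑ uᵢ xⁱ` associated to a binary vector. -/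
noncomputable def polyOf2 {α : ℕ} (u : Fin α → ZMod 2) : Polynomial (ZMod 2) :=
  ∑ i, C (u i) * X ^ (i : ℕ)

/-- The polynomial `∑ u'ⱼ xʲ` associated to a quaternary vector. -/
noncomputable def polyOf4 {β : ℕ} (u : Fin β → ZMod 4) : Polynomial (ZMod 4) :=
  ∑ j, C (u j) * X ^ (j : ℕ)

/-- Membership in the `Z₂Z₄`-additive cyclic code `C = ⟨(b|0), (ℓ|fh+2f)⟩`. -/
def memC {α β : ℕ} (b ℓ : Polynomial (ZMod 2)) (q : Polynomial (ZMod 4))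
    (z : (Fin α → ZMod 2) × (Fin β → ZMod 4)) : Prop :=
  ∃ lam mu : Polynomial (ZMod 4),
    (X ^ α - 1 : Polynomial (ZMod 2)) ∣
        polyOf2 z.1 - (red42 lam * b + red42 mu * ℓ) ∧
    (X ^ β - 1 : Polynomial (ZMod 4)) ∣ polyOf4 z.2 - mu * q

/-- Membership in the `Z₄[x]`-submodule `⟨(b|0), (ℓg|2fg), (0|2fh)⟩`. -/
def memCb {α β : ℕ} (b ℓg : Polynomial (ZMod 2)) (q₂ q₃ : Polynomial (ZMod 4))
    (z : (Fin α → ZMod 2) × (Fin β → ZMod 4)) : Prop :=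
  ∃ lam mu nu : Polynomial (ZMod 4),
    (X ^ α - 1 : Polynomial (ZMod 2)) ∣
        polyOf2 z.1 - (red42 lam * b + red42 mu * ℓg) ∧
    (X ^ β - 1 : Polynomial (ZMod 4)) ∣ polyOf4 z.2 - (mu * q₂ + nu * q₃)

lemma two_eq_C : (2 : Polynomial (ZMod 4)) = C 2 := by
  rw [← map_ofNat (C : ZMod 4 →+* _) 2]

lemma four_eq_zero : (2 : Polynomial (ZMod 4)) * 2 = 0 := by
  rw [two_eq_C, ← map_mul, show (2 : ZMod 4) * 2 = 0 by decide, map_zero]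

lemma red42_two : red42 2 = 0 := by
  rw [map_ofNat, ← map_ofNat (C : ZMod 2 →+* _) 2, show ((2 : ZMod 2)) = 0 by decide, map_zero]

lemma ker_cast42 : RingHom.ker (ZMod.castHom (show 2 ∣ 4 by norm_num) (ZMod 2)) =
    Ideal.span {(2 : ZMod 4)} := by
  ext a
  rw [RingHom.mem_ker, Ideal.mem_span_singleton]
  constructor
  · intro h
    refine ⟨((a.val / 2 : ℕ) : ZMod 4), ?_⟩
    revert h; revert a; decide
  · rintro ⟨c, rfl⟩
    revert c; decide

lemma exists_of_red_zero (p : Polynomial (ZMod 4)) (hp : red42 p = 0) :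
    ∃ q, p = 2 * q := by
  have : p ∈ RingHom.ker red42 := hp
  rw [red42, Polynomial.ker_mapRingHom, ker_cast42, Ideal.map_span] at this
  simp only [Set.image_singleton] at this
  rw [Ideal.mem_span_singleton] at this
  obtain ⟨q, hq⟩ := this
  exact ⟨q, by rw [hq, ← two_eq_C]⟩

lemma two_mul_eq_zero_iff (p : Polynomial (ZMod 4)) : 2 * p = 0 ↔ red42 p = 0 := by
  constructor
  · intro h
    ext n
    have := congrArg (fun r => Polynomial.coeff r n) h
    simp only [two_eq_C, coeff_C_mul, coeff_zero] at this
    simp only [red42, coe_mapRingHom, coeff_map, coeff_zero]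
    revert this
    generalize p.coeff n = a
    revert a; decide
  · intro h
    obtain ⟨q, hq⟩ := exists_of_red_zero p h
    rw [hq, ← mul_assoc, four_eq_zero, zero_mul]

lemma coeff_polyOf4 {β : ℕ} (u : Fin β → ZMod 4) (n : ℕ) :
    (polyOf4 u).coeff n = if h : n < β then u ⟨n, h⟩ else 0 := by
  rw [polyOf4, finset_sum_coeff]
  simp only [coeff_C_mul, coeff_X_pow, mul_ite, mul_one, mul_zero]
  split
  · next h =>
    rw [Finset.sum_eq_single (⟨n, h⟩ : Fin β)]
    · simp
    · intro j _ hj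
      rw [if_neg]
      intro hjn
      exact hj (Fin.ext hjn.symm)
    · simp
  · next h =>
    apply Finset.sum_eq_zero
    intro j _
    rw [if_neg]
    intro hj
    exact h (hj ▸ j.isLt)

lemma red42_xbsub1 (β : ℕ) : red42 (X ^ β - 1) = X ^ β - 1 := by
  simp [red42]

/-- The subcode `C_b` of all codewords of `C = ⟨(b|0), (ℓ|fh+2f)⟩` of order
dividing two equals `⟨(b|0), (ℓg|2fg), (0|2fh)⟩`. -/
theorem order_two_subcode_generators (α β : ℕ) (hα : 0 < α) (hβ : Odd β)
    (f g h : Polynomial (ZMod 4)) (hf : f.Monic) (hg : g.Monic) (hh : h.Monic)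
    (hfac : f * h * g = X ^ β - 1)
    (b ℓ : Polynomial (ZMod 2)) (hb : b ∣ X ^ α - 1) (hℓ : ℓ.degree < b.degree)
    (hdvd : b ∣ red42 (h * g) * ℓ) :
    ∀ z : (Fin α → ZMod 2) × (Fin β → ZMod 4),
      (memC b ℓ (f * h + 2 * f) z ∧ z + z = 0) ↔
        memCb b (ℓ * red42 g) (2 * f * g) (2 * f * h) z := by
  intro z
  have hβ0 : 0 < β := hβ.pos
  haveI : Nontrivial (ZMod 4) := ⟨0, 1, by decide⟩
  have h4 := four_eq_zero
  constructor
  · rintro ⟨⟨lam, mu, h1, h2⟩, hz⟩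
    -- order two gives 2·polyOf4 z.2 = 0
    have hz2 : z.2 + z.2 = 0 := congrArg Prod.snd hz
    have h2P : 2 * polyOf4 z.2 = 0 := by
      ext n
      rw [two_eq_C, coeff_C_mul, coeff_polyOf4, coeff_zero]
      split
      · next hn =>
        have := congrFun hz2 ⟨n, hn⟩
        simpa [two_mul] using this
      · exact mul_zero _
    -- X^β - 1 divides 2·μ·f·h
    have key : (X ^ β - 1 : Polynomial (ZMod 4)) ∣ 2 * (mu * (f * h)) := by
      rw [← dvd_neg]
      have heq : 2 * (polyOf4 z.2 - mu * (f * h + 2 * f)) = -(2 * (mu * (f * h))) := by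
        linear_combination h2P - mu * f * h4
      rw [← heq]
      exact h2.mul_left 2
    obtain ⟨c, hc⟩ := key
    -- c = 2·d
    have hrc : red42 c = 0 := by
      have h0 := congrArg red42 hc
      rw [map_mul, red42_two, zero_mul, map_mul, red42_xbsub1] at h0
      rcases mul_eq_zero.mp h0.symm with h' | h'
      · exact absurd h' (Polynomial.Monic.ne_zero (monic_X_pow_sub_C 1 hβ0.ne'))
      · exact h'
    obtain ⟨d, hd⟩ := exists_of_red_zero c hrc
    rw [hd] at hc
    -- red42 mu = red42 (d * g)
    have hred : red42 mu = red42 (d * g) := by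
      have hzero : 2 * (mu * (f * h) - d * g * (f * h)) = 0 := by
        linear_combination hc - 2 * d * hfac
      have hre := (two_mul_eq_zero_iff _).mp hzero
      rw [map_sub, sub_eq_zero] at hre
      have hfh : red42 (f * h) ≠ 0 := ((hf.mul hh).map _).ne_zero
      apply mul_right_cancel₀ hfh
      rw [← map_mul, ← map_mul]
      exact hre
    -- mu = d*g + 2*e
    obtain ⟨e, he⟩ := exists_of_red_zero (mu - d * g) (by rw [map_sub, hred, sub_self])
    have hmu : mu = d * g + 2 * e := by linear_combination he
    refine ⟨lam, d, e, ?_, ?_⟩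
    · have hrw : red42 d * (ℓ * red42 g) = red42 mu * ℓ := by
        rw [hred, map_mul]; ring
      rw [hrw]
      exact h1
    · have heq : polyOf4 z.2 - (d * (2 * f * g) + e * (2 * f * h)) =
          (polyOf4 z.2 - mu * (f * h + 2 * f)) + d * (X ^ β - 1) := by
        linear_combination (f * h + 2 * f) * hmu + d * hfac + e * f * h4
      rw [heq]
      exact dvd_add h2 (dvd_mul_left _ d)
  · rintro ⟨lam, mu, nu, h1, h2⟩
    refine ⟨⟨lam, mu * g + 2 * nu, ?_, ?_⟩, ?_⟩
    · have hrw : red42 (mu * g + 2 * nu) * ℓ = red42 mu * (ℓ * red42 g) := by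
        rw [map_add, map_mul, map_mul, red42_two, zero_mul]
        ring
      rw [hrw]
      exact h1
    · have heq : polyOf4 z.2 - (mu * g + 2 * nu) * (f * h + 2 * f) =
          (polyOf4 z.2 - (mu * (2 * f * g) + nu * (2 * f * h))) - mu * (X ^ β - 1) := by
        linear_combination -mu * hfac - nu * f * h4
      rw [heq]
      exact dvd_sub h2 (dvd_mul_left _ mu)
    · -- order two
      have hdvd2 : (X ^ β - 1 : Polynomial (ZMod 4)) ∣ 2 * polyOf4 z.2 := by
        have heq : 2 * polyOf4 z.2 =
            2 * (polyOf4 z.2 - (mu * (2 * f * g) + nu * (2 * f * h))) := by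
          linear_combination (mu * f * g + nu * f * h) * h4
        rw [heq]
        exact h2.mul_left 2
      have h2P : 2 * polyOf4 z.2 = 0 := by
        obtain ⟨c, hc⟩ := hdvd2
        rcases eq_or_ne c 0 with rfl | hcne
        · rw [hc, mul_zero]
        · exfalso
          have hmon : (X ^ β - 1 : Polynomial (ZMod 4)).Monic :=
            monic_X_pow_sub_C 1 hβ0.ne'
          have hdegm : (X ^ β - 1 : Polynomial (ZMod 4)).degree = β := by
            rw [show (1 : Polynomial (ZMod 4)) = C 1 from (map_one C).symm]
            exact degree_X_pow_sub_C hβ0 1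
          have hlt : (2 * polyOf4 z.2).degree < (β : WithBot ℕ) := by
            rw [Polynomial.degree_lt_iff_coeff_zero]
            intro m hm
            rw [two_eq_C, coeff_C_mul, coeff_polyOf4, dif_neg (by
              intro hmβ
              exact absurd hm (by simpa using hmβ)), mul_zero]
          rw [hc, mul_comm, hmon.degree_mul, hdegm] at hlt
          have hge : (β : WithBot ℕ) ≤ c.degree + (β : WithBot ℕ) :=
            le_add_of_nonneg_left (Polynomial.zero_le_degree_iff.mpr hcne)
          exact absurd hlt (not_lt.mpr hge)
      have hall : ∀ j : Fin β, z.2 j + z.2 j = 0 := by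
        intro j
        have := congrArg (fun r => Polynomial.coeff r (j : ℕ)) h2P
        simp only [two_eq_C, coeff_C_mul, coeff_polyOf4, coeff_zero, dif_pos j.isLt] at this
        rw [two_mul (z.2 j)] at this
        simpa using this
      have h1' : z.1 + z.1 = 0 := by
        funext i
        show z.1 i + z.1 i = 0
        generalize z.1 i = a
        revert a; decide
      have h2' : z.2 + z.2 = 0 := funext hall
      exact Prod.ext h1' h2'
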